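/- Let n ≥ 2 and let f : M_{2n} → {0,1} satisfy: f(m) = 1 implies that {2n−1, 2n} is an edge of m. Define g : M_{2(n−1)} → {0,1} by g(m') = f(m' ∪ {{2n−1, 2n}}), where m' ∪ {{2n−1,2n}} denotes the perfect matching of [2n] obtained from the perfect matching m' of [2n−2] by adding the edge {2n−1, 2n}. Then deg g ≤ max(deg f − 1, 0). -/

import Mathlib

/-- A perfect matching of the complete graph on `[N]`, viewed as a fixed-point-free
involution of `Fin N`. -/
def PM (N : ℕ) := {m : Fin N → Fin N // (∀ i, m i ≠ i) ∧ ∀ i, m (m i) = i}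

instance (N : ℕ) : Fintype (PM N) := Subtype.fintype _
instance (N : ℕ) : DecidableEq (PM N) := fun a b =>
  decidable_of_iff (a.1 = b.1) Subtype.ext_iff.symm

/-- The edge set of a perfect matching. -/
def PM.edges {N : ℕ} (m : PM N) : Finset (Sym2 (Fin N)) :=
  Finset.univ.image fun i => s(i, m.1 i)

/-- Two perfect matchings are 2-intersecting: they share at least two edges. -/
def PMTwoIntersecting {N : ℕ} (m1 m2 : PM N) : Prop :=
  2 ≤ (PM.edges m1 ∩ PM.edges m2).card

/-- A family of perfect matchings is 2-intersecting. -/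
def PMTwoIntersectingFamily {N : ℕ} (F : Finset (PM N)) : Prop :=
  ∀ m1 ∈ F, ∀ m2 ∈ F, PMTwoIntersecting m1 m2

/-- A valid certificate: a set of pairwise disjoint non-loop unordered pairs. -/
def ValidEdgeSet {N : ℕ} (C : Finset (Sym2 (Fin N))) : Prop :=
  (∀ e ∈ C, ¬ e.IsDiag) ∧
    ∀ e ∈ C, ∀ f ∈ C, e ≠ f → ∀ a : Fin N, a ∈ e → a ∉ f

/-- `m` satisfies the certificate `C`: every pair of `C` is an edge of `m`. -/
def PMSatisfies {N : ℕ} (m : PM N) (C : Finset (Sym2 (Fin N))) : Prop :=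
  ∀ e ∈ C, e ∈ PM.edges m

/-- `C` is a certificate for `m` with respect to `f`. -/
def IsPMCertFor {N : ℕ} (f : PM N → ℝ) (m : PM N) (C : Finset (Sym2 (Fin N))) : Prop :=
  ValidEdgeSet C ∧ PMSatisfies m C ∧ ∀ m' : PM N, PMSatisfies m' C → f m' = f m

/-- The certificate complexity `C(f, m)`: the minimum size of a certificate for `m`. -/
noncomputable def pmCertComplexityAt {N : ℕ} (f : PM N → ℝ) (m : PM N) : ℕ :=
  sInf {k | ∃ C : Finset (Sym2 (Fin N)), C.card = k ∧ IsPMCertFor f m C}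

/-- The certificate complexity `C(f)`: the maximum of `C(f, m)` over all `m`. -/
noncomputable def pmCertComplexity {N : ℕ} (f : PM N → ℝ) : ℕ :=
  Finset.univ.sup fun m : PM N => pmCertComplexityAt f m

/-- The monomial `m ↦ ∏_{{i,j} ∈ S} x_{ij}(m)`. -/
def pmMonomial {N : ℕ} (S : Finset (Sym2 (Fin N))) : PM N → ℝ :=
  fun m => ∏ e ∈ S, if e ∈ PM.edges m then (1 : ℝ) else 0

/-- `f : M_N → ℝ` has degree at most `d`: it is a real linear combination of monomials
`∏_{{i,j} ∈ S} x_{ij}` with `|S| ≤ d`. -/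
def PMDegLE (N d : ℕ) (f : PM N → ℝ) : Prop :=
  f ∈ Submodule.span ℝ {g : PM N → ℝ |
    ∃ S : Finset (Sym2 (Fin N)), S.card ≤ d ∧ g = pmMonomial S}

/-- The degree of `f : M_N → ℝ`. -/
noncomputable def pmDeg (N : ℕ) (f : PM N → ℝ) : ℕ :=
  sInf {d | PMDegLE N d f}

/-- The coset `U_{i↔j} = {m : m(i) = j}`, for `p = (i, j)`. -/
def PMCoset {N : ℕ} (p : Fin N × Fin N) : Set (PM N) :=
  {m : PM N | m.1 p.1 = p.2}

/-- The coset of all matchings containing the (non-loop) unordered pair `e`. -/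
def PMCosetE {N : ℕ} (e : Sym2 (Fin N)) : Set (PM N) :=
  {m : PM N | e ∈ PM.edges m}

/-- `F` is `r`-covered: it is contained in a union of `r` pairwise compatible cosets. -/
def PMRCovered {N : ℕ} (r : ℕ) (F : Finset (PM N)) : Prop :=
  ∃ P : Finset (Sym2 (Fin N)), P.card = r ∧ (∀ e ∈ P, ¬ e.IsDiag) ∧
    (∀ e ∈ P, ∀ e' ∈ P, (PMCosetE e ∩ PMCosetE e').Nonempty) ∧
    ↑F ⊆ ⋃ e ∈ P, PMCosetE e

/-- A `t`-coset of `M_N`: the set of all perfect matchings containing `t` fixed pairwise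
disjoint edges. -/
def IsPMTCoset {N : ℕ} (t : ℕ) (S : Set (PM N)) : Prop :=
  ∃ C : Finset (Sym2 (Fin N)), C.card = t ∧ ValidEdgeSet C ∧
    S = {m : PM N | ∀ e ∈ C, e ∈ PM.edges m}

/-- Extend a perfect matching of `[k]` to a perfect matching of `[N]` (where `N = k + 2`)
by adding the edge joining the two last points. -/
def extPM (k N : ℕ) (h : N = k + 2) (m : PM k) : PM N := by
  refine ⟨fun i => if hi : (i : ℕ) < k then
      ⟨m.1 ⟨i, hi⟩, by have := (m.1 ⟨i, hi⟩).isLt; omega⟩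
    else if (i : ℕ) = k then ⟨k + 1, by omega⟩ else ⟨k, by omega⟩, ?_, ?_⟩
  · intro i
    dsimp only
    split_ifs with h1 h2
    · have := m.2.1 ⟨i, h1⟩
      simp only [Ne, Fin.ext_iff] at this ⊢
      exact this
    · simp only [Ne, Fin.ext_iff]
      omega
    · have : (i : ℕ) < N := i.isLt
      simp only [Ne, Fin.ext_iff]
      omega
  · intro i
    dsimp only
    by_cases h1 : (i : ℕ) < k
    · rw [dif_pos h1]
      have h2 : ((m.1 ⟨i, h1⟩ : ℕ)) < k := (m.1 ⟨i, h1⟩).isLt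
      rw [dif_pos h2]
      have := m.2.2 ⟨i, h1⟩
      simp only [Fin.ext_iff] at this ⊢
      simpa using this
    · rw [dif_neg h1]
      by_cases h2 : (i : ℕ) = k
      · rw [if_pos h2]
        have : ¬ ((k + 1 : ℕ) < k) := by omega
        rw [dif_neg (by simp)]
        rw [if_neg (by simp)]
        simp [Fin.ext_iff]
        omega
      · rw [if_neg h2]
        rw [dif_neg (by simp)]
        rw [if_pos (by simp)]
        have : (i : ℕ) < N := i.isLt
        simp [Fin.ext_iff]
        omega

section PMaux
variable {N : ℕ}

lemma PM.inj (m : PM N) : Function.Injective m.1 := by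
  intro a b h
  have := m.2.2 a
  rw [h, m.2.2] at this
  exact this.symm

lemma mem_edges_iff {m : PM N} {i j : Fin N} : s(i, j) ∈ PM.edges m ↔ m.1 i = j := by
  constructor
  · intro h
    simp only [PM.edges, Finset.mem_image, Finset.mem_univ, true_and] at h
    obtain ⟨a, ha⟩ := h
    rw [Sym2.eq_iff] at ha
    rcases ha with ⟨rfl, rfl⟩ | ⟨rfl, h2⟩
    · rfl
    · rw [← h2, m.2.2]
  · intro h
    simp only [PM.edges, Finset.mem_image, Finset.mem_univ, true_and]
    exact ⟨i, by rw [h]⟩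

lemma edge_eq_of_mem {m : PM N} {e : Sym2 (Fin N)} {a : Fin N} (ha : a ∈ e)
    (he : e ∈ PM.edges m) : e = s(a, m.1 a) := by
  induction e using Sym2.ind with
  | _ x y =>
    rw [Sym2.mem_iff] at ha
    rcases ha with rfl | rfl
    · rw [mem_edges_iff] at he; rw [he]
    · rw [Sym2.eq_swap] at he ⊢
      rw [mem_edges_iff] at he; rw [he]

lemma not_isDiag_of_mem_edges {m : PM N} {e : Sym2 (Fin N)} (he : e ∈ PM.edges m) :
    ¬ e.IsDiag := by
  induction e using Sym2.ind with
  | _ x y =>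
    rw [mem_edges_iff] at he
    rw [Sym2.isDiag_iff_proj_eq]
    intro h
    exact m.2.1 x (he.trans h.symm)

end PMaux
section PMaux2
variable {N : ℕ}

lemma pm_ext_of_almost (m' m0 : PM N) (a0 : Fin N)
    (h : ∀ i, i ≠ a0 → i ≠ m0.1 a0 → m'.1 i = m0.1 i) : m' = m0 := by
  have key : m'.1 a0 = m0.1 a0 := by
    by_contra hb
    have hba : m'.1 a0 ≠ a0 := m'.2.1 a0
    have h2 := h (m'.1 a0) hba hb
    rw [m'.2.2] at h2
    apply hb
    have := congrArg m0.1 h2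
    rw [m0.2.2] at this
    rw [← this]
  apply Subtype.ext; funext i
  by_cases h1 : i = a0
  · subst h1; exact key
  by_cases h2 : i = m0.1 a0
  · subst h2
    rw [← key, m'.2.2, key, m0.2.2]
  · exact h i h1 h2

lemma self_edge_mem (m : PM N) (i : Fin N) : s(i, m.1 i) ∈ PM.edges m :=
  mem_edges_iff.2 rfl

lemma card_edges_le (k : ℕ) (m : PM (2*k)) : (PM.edges m).card ≤ k := by
  classical
  set A : Finset (Fin (2*k)) := Finset.univ.filter (fun i => (i : ℕ) < (m.1 i : ℕ)) with hA
  have hedges : PM.edges m = A.image (fun i => s(i, m.1 i)) := by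
    apply Finset.Subset.antisymm
    · intro e he
      simp only [PM.edges, Finset.mem_image, Finset.mem_univ, true_and] at he
      obtain ⟨i, rfl⟩ := he
      rcases lt_or_ge (i : ℕ) (m.1 i : ℕ) with hlt | hge
      · exact Finset.mem_image.2 ⟨i, Finset.mem_filter.2 ⟨Finset.mem_univ _, hlt⟩, rfl⟩
      · have hne : (m.1 i : ℕ) ≠ (i : ℕ) := by
          intro hc
          exact m.2.1 i (Fin.ext hc)
        have hlt : ((m.1 i) : ℕ) < (m.1 (m.1 i) : ℕ) := by
          rw [m.2.2]; omega
        refine Finset.mem_image.2 ⟨m.1 i, Finset.mem_filter.2 ⟨Finset.mem_univ _, hlt⟩, ?_⟩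
        rw [m.2.2, Sym2.eq_swap]
    · intro e he
      simp only [Finset.mem_image] at he
      obtain ⟨i, _, rfl⟩ := he
      exact self_edge_mem m i
  have hcardA : A.card + A.card ≤ 2 * k := by
    have hdisj : Disjoint A (A.image m.1) := by
      rw [Finset.disjoint_left]
      intro x hx hx2
      simp only [Finset.mem_image] at hx2
      obtain ⟨y, hy, rfl⟩ := hx2
      simp only [hA, Finset.mem_filter, Finset.mem_univ, true_and] at hx hy
      rw [m.2.2] at hx
      omega
    have := Finset.card_le_univ (A ∪ A.image m.1)
    rw [Finset.card_union_of_disjoint hdisj, Finset.card_image_of_injective _ (PM.inj m)] at this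
    simpa using this
  calc (PM.edges m).card ≤ A.card := by rw [hedges]; exact Finset.card_image_le
    _ ≤ k := by omega

lemma mono_indicator (k : ℕ) (hk : 1 ≤ k) (m0 : PM (2*k)) :
    pmMonomial ((PM.edges m0).erase (s(⟨0, by omega⟩, m0.1 ⟨0, by omega⟩))) =
      fun m' => if m' = m0 then (1 : ℝ) else 0 := by
  classical
  set a0 : Fin (2*k) := ⟨0, by omega⟩
  funext m'
  by_cases hm : m' = m0
  · subst hm
    rw [if_pos rfl]
    apply Finset.prod_eq_one
    intro e he
    rw [if_pos (Finset.mem_of_mem_erase he)]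
  · rw [if_neg hm]
    unfold pmMonomial
    by_contra hne
    have hall : ∀ e ∈ (PM.edges m0).erase (s(a0, m0.1 a0)), e ∈ PM.edges m' := by
      intro e he
      by_contra hce
      exact hne (Finset.prod_eq_zero he (by rw [if_neg hce]))
    apply hm
    apply pm_ext_of_almost m' m0 a0
    intro i h1 h2
    have hmem : s(i, m0.1 i) ∈ (PM.edges m0).erase (s(a0, m0.1 a0)) := by
      refine Finset.mem_erase.2 ⟨?_, self_edge_mem m0 i⟩
      intro hc
      rw [Sym2.eq_iff] at hc
      rcases hc with ⟨hc1, -⟩ | ⟨hc1, -⟩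
      · exact h1 hc1
      · exact h2 hc1
    exact mem_edges_iff.1 (hall _ hmem)

lemma span_all (k : ℕ) (hk : 1 ≤ k) (h : PM (2*k) → ℝ) : PMDegLE (2*k) (k-1) h := by
  classical
  have hrep : h = ∑ m0 : PM (2*k), h m0 •
      pmMonomial ((PM.edges m0).erase (s(⟨0, by omega⟩, m0.1 ⟨0, by omega⟩))) := by
    funext m'
    rw [Finset.sum_apply]
    have : ∀ m0 : PM (2*k), (h m0 • pmMonomial
        ((PM.edges m0).erase (s(⟨0, by omega⟩, m0.1 ⟨0, by omega⟩)))) m' =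
        if m' = m0 then h m0 else 0 := by
      intro m0
      rw [Pi.smul_apply, mono_indicator k hk m0]
      by_cases hm : m' = m0 <;> simp [hm]
    rw [Finset.sum_congr rfl (fun m0 _ => this m0)]
    simp
  rw [hrep]
  apply Submodule.sum_mem
  intro m0 _
  apply Submodule.smul_mem
  apply Submodule.subset_span
  refine ⟨_, ?_, rfl⟩
  calc ((PM.edges m0).erase (s(⟨0, by omega⟩, m0.1 ⟨0, by omega⟩))).card
      ≤ (PM.edges m0).card - 1 := by
        rw [Finset.card_erase_of_mem (self_edge_mem m0 _)]
    _ ≤ k - 1 := Nat.sub_le_sub_right (card_edges_le k m0) 1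

end PMaux2
def ιc (K N : ℕ) (h : N = K + 2) : Fin K → Fin N := Fin.castLE (by omega)

def swapExt (K N : ℕ) (h : N = K + 2) (a : Fin K) (m : PM K) : PM N := by
  refine ⟨fun i => if hi : (i : ℕ) < K then
      (if (⟨i, hi⟩ : Fin K) = a then ⟨K, by omega⟩
       else if (⟨i, hi⟩ : Fin K) = m.1 a then ⟨K+1, by omega⟩
       else ⟨m.1 ⟨i, hi⟩, by have := (m.1 ⟨i, hi⟩).isLt; omega⟩)
    else if (i : ℕ) = K then ⟨a, by have := a.isLt; omega⟩
    else ⟨m.1 a, by have := (m.1 a).isLt; omega⟩, ?_, ?_⟩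
  · intro i
    dsimp only
    split_ifs with h1 h2 h3 h4
    · simp only [Ne, Fin.ext_iff]; omega
    · simp only [Ne, Fin.ext_iff]; omega
    · have := m.2.1 ⟨i, h1⟩
      simp only [Ne, Fin.ext_iff] at this ⊢
      exact this
    · have := a.isLt
      simp only [Ne, Fin.ext_iff]; omega
    · have : (i : ℕ) < N := i.isLt
      have := (m.1 a).isLt
      simp only [Ne, Fin.ext_iff]; omega
  · intro i
    dsimp only
    by_cases h1 : (i : ℕ) < K
    · rw [dif_pos h1]
      by_cases h2 : (⟨i, h1⟩ : Fin K) = a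
      · rw [if_pos h2]
        rw [dif_neg (by simp only [Fin.val_mk]; omega), if_pos rfl]
        simp only [Fin.ext_iff] at h2 ⊢
        omega
      · rw [if_neg h2]
        by_cases h3 : (⟨i, h1⟩ : Fin K) = m.1 a
        · rw [if_pos h3]
          rw [dif_neg (by simp only [Fin.val_mk]; omega), if_neg (by simp only [Fin.val_mk]; omega)]
          simp only [Fin.ext_iff] at h3 ⊢
          omega
        · rw [if_neg h3]
          have hlt : ((m.1 ⟨i, h1⟩ : Fin K) : ℕ) < K := (m.1 ⟨i, h1⟩).isLt
          rw [dif_pos hlt]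
          have e1 : (⟨((m.1 ⟨i, h1⟩ : Fin K) : ℕ), hlt⟩ : Fin K) = m.1 ⟨i, h1⟩ := Fin.eta _ _
          rw [if_neg (by
            rw [e1]; intro hc
            apply h3
            rw [← hc, m.2.2])]
        
          rw [if_neg (by
            rw [e1]; intro hc
            exact h2 (PM.inj m hc))]
          simp only [e1, m.2.2]
    · rw [dif_neg h1]
      by_cases h2 : (i : ℕ) = K
      · rw [if_pos h2]
        have ha : (a : ℕ) < K := a.isLt
        rw [dif_pos ha]
        have e1 : (⟨((a : Fin K) : ℕ), ha⟩ : Fin K) = a := Fin.eta _ _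
        rw [if_pos e1]
        simp only [Fin.ext_iff]
        omega
      · rw [if_neg h2]
        have ha : ((m.1 a : Fin K) : ℕ) < K := (m.1 a).isLt
        rw [dif_pos ha]
        have e1 : (⟨((m.1 a : Fin K) : ℕ), ha⟩ : Fin K) = m.1 a := Fin.eta _ _
        rw [if_neg (by rw [e1]; intro hc; exact m.2.1 a (PM.inj m (by rw [m.2.2, hc])))]
        rw [if_pos e1]
        have : (i : ℕ) < N := i.isLt
        simp only [Fin.ext_iff]
        omega
section PMaux4
variable {K N : ℕ} (hKN : N = K + 2) (m : PM K)

lemma ιc_inj : Function.Injective (ιc K N hKN) := Fin.castLE_injective _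

lemma ιc_val (i : Fin K) : ((ιc K N hKN i : Fin N) : ℕ) = (i : ℕ) := rfl

lemma extPM_int (i : Fin K) :
    (extPM K N hKN m).1 (ιc K N hKN i) = ιc K N hKN (m.1 i) := by
  show (extPM K N hKN m).1 ⟨(i : ℕ), by omega⟩ = _
  unfold extPM
  dsimp only
  rw [dif_pos i.isLt]
  apply Fin.ext
  simp [ιc]

lemma extPM_u : (extPM K N hKN m).1 ⟨K, by omega⟩ = ⟨K + 1, by omega⟩ := by
  unfold extPM
  dsimp only
  rw [dif_neg (by simp), if_pos rfl]

lemma extPM_v : (extPM K N hKN m).1 ⟨K + 1, by omega⟩ = ⟨K, by omega⟩ := by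
  unfold extPM
  dsimp only
  rw [dif_neg (by simp), if_neg (by simp)]

lemma swapExt_int (a i : Fin K) (h2 : i ≠ a) (h3 : i ≠ m.1 a) :
    (swapExt K N hKN a m).1 (ιc K N hKN i) = ιc K N hKN (m.1 i) := by
  show (swapExt K N hKN a m).1 ⟨(i : ℕ), by omega⟩ = _
  unfold swapExt
  dsimp only
  rw [dif_pos i.isLt]
  rw [if_neg (by rw [Fin.eta]; exact h2), if_neg (by rw [Fin.eta]; exact h3)]
  apply Fin.ext
  simp [ιc]

lemma swapExt_a (a : Fin K) :
    (swapExt K N hKN a m).1 (ιc K N hKN a) = ⟨K, by omega⟩ := by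
  show (swapExt K N hKN a m).1 ⟨(a : ℕ), by omega⟩ = _
  unfold swapExt
  dsimp only
  rw [dif_pos a.isLt, if_pos (Fin.eta _ _)]

lemma swapExt_ma (a : Fin K) :
    (swapExt K N hKN a m).1 (ιc K N hKN (m.1 a)) = ⟨K + 1, by omega⟩ := by
  show (swapExt K N hKN a m).1 ⟨((m.1 a : Fin K) : ℕ), by omega⟩ = _
  unfold swapExt
  dsimp only
  rw [dif_pos (m.1 a).isLt]
  rw [if_neg (by rw [Fin.eta]; exact m.2.1 a), if_pos (Fin.eta _ _)]

lemma swapExt_u (a : Fin K) :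
    (swapExt K N hKN a m).1 ⟨K, by omega⟩ = ιc K N hKN a := by
  unfold swapExt
  dsimp only
  rw [dif_neg (by simp), if_pos rfl]
  apply Fin.ext
  simp [ιc]

lemma swapExt_v (a : Fin K) :
    (swapExt K N hKN a m).1 ⟨K + 1, by omega⟩ = ιc K N hKN (m.1 a) := by
  unfold swapExt
  dsimp only
  rw [dif_neg (by simp), if_neg (by simp)]
  apply Fin.ext
  simp [ιc]

lemma mem_edges_ext (e : Sym2 (Fin K)) :
    Sym2.map (ιc K N hKN) e ∈ PM.edges (extPM K N hKN m) ↔ e ∈ PM.edges m := by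
  induction e using Sym2.ind with
  | _ x y =>
    rw [Sym2.map_pair_eq, mem_edges_iff, mem_edges_iff, extPM_int]
    exact ⟨fun hc => ιc_inj hKN hc, fun hc => by rw [hc]⟩

lemma mem_edges_swap (a : Fin K) (e : Sym2 (Fin K)) :
    Sym2.map (ιc K N hKN) e ∈ PM.edges (swapExt K N hKN a m) ↔
      (e ∈ PM.edges m ∧ a ∉ e ∧ m.1 a ∉ e) := by
  induction e using Sym2.ind with
  | _ x y =>
    rw [Sym2.map_pair_eq, mem_edges_iff, mem_edges_iff]
    simp only [Sym2.mem_iff, not_or]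
    constructor
    · intro hc
      by_cases h2 : x = a
      · subst h2
        rw [swapExt_a] at hc
        exfalso
        have := y.isLt
        have := congrArg (fun z : Fin N => (z : ℕ)) hc
        simp [ιc] at this
        omega
      by_cases h3 : x = m.1 a
      · subst h3
        rw [swapExt_ma] at hc
        exfalso
        have := y.isLt
        have := congrArg (fun z : Fin N => (z : ℕ)) hc
        simp [ιc] at this
        omega
      rw [swapExt_int hKN m a x h2 h3] at hc
      have hm : m.1 x = y := ιc_inj hKN hc
      refine ⟨hm, ⟨fun hax => h2 hax.symm, fun hay => ?_⟩,
        ⟨fun hmx => h3 hmx.symm, fun hmy => ?_⟩⟩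
      · apply h3
        rw [hay, ← hm, m.2.2]
      · exact h2 (PM.inj m (hm.trans hmy.symm))
    · rintro ⟨hm, ⟨ha1, ha2⟩, hma1, hma2⟩
      rw [swapExt_int hKN m a x (fun hc => ha1 hc.symm) (fun hc => hma1 hc.symm), hm]

end PMaux4
def πc (K N : ℕ) (hK : 0 < K) : Fin N → Fin K :=
  fun x => if hx : (x : ℕ) < K then ⟨x, hx⟩ else ⟨0, hK⟩

section PMaux5
variable {K N : ℕ}

lemma lower_π (hKN : N = K + 2) (hK : 0 < K) (e : Sym2 (Fin N)) (he : ∀ x ∈ e, (x : ℕ) < K) :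
    Sym2.map (ιc K N hKN) (Sym2.map (πc K N hK) e) = e := by
  induction e using Sym2.ind with
  | _ x y =>
    have hx := he x (by simp)
    have hy := he y (by simp)
    rw [Sym2.map_pair_eq, Sym2.map_pair_eq]
    have ex : ιc K N hKN (πc K N hK x) = x := by apply Fin.ext; simp [ιc, πc, hx]
    have ey : ιc K N hKN (πc K N hK y) = y := by apply Fin.ext; simp [ιc, πc, hy]
    rw [ex, ey]

lemma prod_lower (hKN : N = K + 2) (hK : 0 < K) (Si : Finset (Sym2 (Fin N)))
    (hint : ∀ e ∈ Si, ∀ x ∈ e, (x : ℕ) < K) (F : Sym2 (Fin N) → ℝ) :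
    ∏ e ∈ Si, F e = ∏ e' ∈ Si.image (Sym2.map (πc K N hK)), F (Sym2.map (ιc K N hKN) e') := by
  rw [Finset.prod_image]
  · apply Finset.prod_congr rfl
    intro e he
    rw [lower_π hKN hK e (hint e he)]
  · intro e1 h1 e2 h2 hEq
    have := congrArg (Sym2.map (ιc K N hKN)) hEq
    rwa [lower_π hKN hK e1 (hint e1 h1), lower_π hKN hK e2 (hint e2 h2)] at this

lemma card_image_π (hKN : N = K + 2) (hK : 0 < K) (Si : Finset (Sym2 (Fin N)))
    (hint : ∀ e ∈ Si, ∀ x ∈ e, (x : ℕ) < K) :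
    (Si.image (Sym2.map (πc K N hK))).card = Si.card := by
  apply Finset.card_image_of_injOn
  intro e1 h1 e2 h2 hEq
  have := congrArg (Sym2.map (ιc K N hKN)) hEq
  rwa [lower_π hKN hK e1 (hint e1 h1), lower_π hKN hK e2 (hint e2 h2)] at this

end PMaux5

section PMaux6
variable {N : ℕ}

lemma monomial_zero_of_invalid {S : Finset (Sym2 (Fin N))} (hS : ¬ ValidEdgeSet S)
    (mm : PM N) : pmMonomial S mm = 0 := by
  unfold pmMonomial
  by_cases hdiag : ∀ e ∈ S, ¬ e.IsDiag
  · have h2 : ¬ ∀ e ∈ S, ∀ f ∈ S, e ≠ f → ∀ a : Fin N, a ∈ e → a ∉ f :=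
      fun hc => hS ⟨hdiag, hc⟩
    push_neg at h2
    obtain ⟨e, heS, f, hfS, hef, a, hae, haf⟩ := h2
    by_cases hme : e ∈ PM.edges mm
    · refine Finset.prod_eq_zero hfS ?_
      rw [if_neg ?_]
      intro hmf
      exact hef ((edge_eq_of_mem hae hme).trans (edge_eq_of_mem haf hmf).symm)
    · exact Finset.prod_eq_zero heS (by rw [if_neg hme])
  · push_neg at hdiag
    obtain ⟨e, heS, hdg⟩ := hdiag
    refine Finset.prod_eq_zero heS ?_
    rw [if_neg (fun hc => not_isDiag_of_mem_edges hc hdg)]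

lemma mem_edge_partner {m : PM N} {e : Sym2 (Fin N)} (he : e ∈ PM.edges m) (b : Fin N) :
    b ∈ e ↔ m.1 b ∈ e := by
  constructor
  · intro hb
    rw [edge_eq_of_mem hb he]
    simp
  · intro hb
    rw [edge_eq_of_mem hb he, m.2.2]
    simp

lemma prod_avoid (m : PM N) (T : Finset (Sym2 (Fin N))) (b : Fin N)
    (hb : ∀ e' ∈ T, e' ∈ PM.edges m → b ∉ e') :
    ∏ e' ∈ T, (if e' ∈ PM.edges m ∧ b ∉ e' ∧ m.1 b ∉ e' then (1 : ℝ) else 0)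
      = ∏ e' ∈ T, (if e' ∈ PM.edges m then (1 : ℝ) else 0) := by
  apply Finset.prod_congr rfl
  intro e' he'
  by_cases hm : e' ∈ PM.edges m
  · rw [if_pos hm, if_pos ⟨hm, hb e' he' hm, fun hc => hb e' he' hm
      ((mem_edge_partner hm b).2 hc)⟩]
  · rw [if_neg hm, if_neg (fun hc => hm hc.1)]

lemma sum_mem_sym2 {p q : Fin N} (hpq : p ≠ q) :
    ∑ a : Fin N, (if a ∈ s(p, q) then (1 : ℝ) else 0) = 2 := by
  have : ∀ a : Fin N, (if a ∈ s(p, q) then (1 : ℝ) else 0) =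
      (if a = p then (1 : ℝ) else 0) + (if a = q then (1 : ℝ) else 0) := by
    intro a
    simp only [Sym2.mem_iff]
    by_cases h1 : a = p
    · subst h1
      rw [if_pos (Or.inl rfl), if_pos rfl, if_neg hpq]
      norm_num
    by_cases h2 : a = q
    · subst h2
      rw [if_pos (Or.inr rfl), if_neg h1, if_pos rfl]
      norm_num
    · rw [if_neg (by tauto), if_neg h1, if_neg h2]
      norm_num
  rw [Finset.sum_congr rfl (fun a _ => this a), Finset.sum_add_distrib]
  simp [Finset.sum_ite_eq]
  norm_num

lemma sum_swap_interior {K : ℕ} (m : PM K) (T : Finset (Sym2 (Fin K))) :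
    ∑ a : Fin K, ∏ e' ∈ T, (if e' ∈ PM.edges m ∧ a ∉ e' ∧ m.1 a ∉ e' then (1 : ℝ) else 0)
      = ((K : ℝ) - 2 * T.card) * ∏ e' ∈ T, (if e' ∈ PM.edges m then (1 : ℝ) else 0) := by
  classical
  by_cases hM : ∀ e' ∈ T, e' ∈ PM.edges m
  · -- all edges present
    have hprod : ∏ e' ∈ T, (if e' ∈ PM.edges m then (1 : ℝ) else 0) = 1 :=
      Finset.prod_eq_one (fun e' he' => if_pos (hM e' he'))
    have hterm : ∀ a : Fin K,
        ∏ e' ∈ T, (if e' ∈ PM.edges m ∧ a ∉ e' ∧ m.1 a ∉ e' then (1 : ℝ) else 0)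
          = 1 - ∑ e' ∈ T, (if a ∈ e' then (1 : ℝ) else 0) := by
      intro a
      by_cases hex : ∃ e0 ∈ T, a ∈ e0
      · obtain ⟨e0, he0, hae0⟩ := hex
        have hsum : ∑ e' ∈ T, (if a ∈ e' then (1 : ℝ) else 0) = 1 := by
          rw [Finset.sum_eq_single_of_mem e0 he0]
          · rw [if_pos hae0]
          · intro e1 he1 hne
            rw [if_neg ?_]
            intro hae1
            exact hne ((edge_eq_of_mem hae1 (hM e1 he1)).trans
              (edge_eq_of_mem hae0 (hM e0 he0)).symm)
        rw [hsum, Finset.prod_eq_zero he0 (by rw [if_neg (fun hc => hc.2.1 hae0)])]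
        norm_num
      · push_neg at hex
        have hsum : ∑ e' ∈ T, (if a ∈ e' then (1 : ℝ) else 0) = 0 :=
          Finset.sum_eq_zero (fun e' he' => by rw [if_neg (hex e' he')])
        rw [hsum]
        rw [Finset.prod_eq_one]
        · norm_num
        intro e' he'
        rw [if_pos ⟨hM e' he', hex e' he', fun hc => hex e' he'
          ((mem_edge_partner (hM e' he') a).2 hc)⟩]
    rw [Finset.sum_congr rfl (fun a _ => hterm a), Finset.sum_sub_distrib]
    rw [Finset.sum_comm]
    have h2 : ∀ e' ∈ T, ∑ a : Fin K, (if a ∈ e' then (1 : ℝ) else 0) = 2 := by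
      intro e' he'
      induction e' using Sym2.ind with
      | _ p q =>
        have hpq : p ≠ q := by
          intro hc
          exact not_isDiag_of_mem_edges (hM _ he') (by rw [hc]; exact Sym2.isDiag_iff_proj_eq.2 rfl)
        exact sum_mem_sym2 hpq
    rw [Finset.sum_congr rfl h2, hprod]
    simp [Finset.sum_const, Finset.card_univ]
    ring
  · -- some edge absent
    push_neg at hM
    obtain ⟨e0, he0, hne0⟩ := hM
    rw [Finset.prod_eq_zero he0 (by rw [if_neg hne0]), mul_zero]
    apply Finset.sum_eq_zero
    intro a _
    exact Finset.prod_eq_zero he0 (by rw [if_neg (fun hc => hne0 hc.1)])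

end PMaux6
lemma psi_mem (K N : ℕ) (hKN : N = K + 2) (hK : 0 < K) (d : ℕ)
    (S : Finset (Sym2 (Fin N))) (hS : S.card ≤ d) :
    (fun m : PM K => ((K : ℝ) - 2 * d) * pmMonomial S (extPM K N hKN m)
        - ∑ a : Fin K, pmMonomial S (swapExt K N hKN a m))
      ∈ Submodule.span ℝ {g : PM K → ℝ |
          ∃ T : Finset (Sym2 (Fin K)), T.card ≤ d - 1 ∧ g = pmMonomial T} := by
  classical
  set u : Fin N := ⟨K, by omega⟩ with hu_def
  set v : Fin N := ⟨K + 1, by omega⟩ with hv_def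
  have hιu : ∀ z : Fin K, ιc K N hKN z ≠ u := by
    intro z hc
    have h1 := z.isLt
    have h2 := congrArg Fin.val hc
    simp only [ιc_val, hu_def] at h2
    omega
  have hιv : ∀ z : Fin K, ιc K N hKN z ≠ v := by
    intro z hc
    have h1 := z.isLt
    have h2 := congrArg Fin.val hc
    simp only [ιc_val, hv_def] at h2
    omega
  have huv : u ≠ v := by
    intro hc
    have := congrArg Fin.val hc
    simp only [hu_def, hv_def] at this
    omega
  by_cases hvalid : ValidEdgeSet S
  swap
  · have hzero : (fun m : PM K => ((K : ℝ) - 2 * d) * pmMonomial S (extPM K N hKN m)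
        - ∑ a : Fin K, pmMonomial S (swapExt K N hKN a m)) = 0 := by
      funext m
      simp only [monomial_zero_of_invalid hvalid, Pi.zero_apply, mul_zero,
        Finset.sum_const_zero, sub_zero]
    rw [hzero]
    exact Submodule.zero_mem _
  -- helper to extract the interior endpoint of a boundary edge
  have hget : ∀ w e, e ∈ S → e = s(w, u) ∨ e = s(w, v) → e ≠ s(u, v) →
      ∃ x0 : Fin K, w = ιc K N hKN x0 := by
    intro w e heS hcase hne
    have hwN := w.isLt
    have hwK : (w : ℕ) < K := by
      by_contra hcon
      push_neg at hcon
      have hwu_or : w = u ∨ w = v := by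
        rcases Nat.lt_or_ge (w : ℕ) (K + 1) with h | h
        · left; apply Fin.ext; simp only [hu_def]; omega
        · right; apply Fin.ext; simp only [hv_def]; omega
      rcases hwu_or with rfl | rfl
      · rcases hcase with rfl | rfl
        · exact hvalid.1 _ heS (Sym2.mk_isDiag_iff.2 rfl)
        · exact hne rfl
      · rcases hcase with rfl | rfl
        · exact hne (Sym2.eq_swap)
        · exact hvalid.1 _ heS (Sym2.mk_isDiag_iff.2 rfl)
    exact ⟨⟨(w : ℕ), hwK⟩, Fin.ext rfl⟩
  by_cases he0 : s(u, v) ∈ S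
  · -- Case 1 : the special edge is in S
    set Si := S.erase s(u, v) with hSi
    have hint : ∀ e ∈ Si, ∀ x ∈ e, (x : ℕ) < K := by
      intro e he x hx
      by_contra hxK
      push_neg at hxK
      have hxN := x.isLt
      have hxuv : x ∈ s(u, v) := by
        rw [Sym2.mem_iff]
        rcases Nat.lt_or_ge (x : ℕ) (K + 1) with h | h
        · left; apply Fin.ext; simp only [hu_def]; omega
        · right; apply Fin.ext; simp only [hv_def]; omega
      exact hvalid.2 s(u, v) he0 e (Finset.mem_of_mem_erase he)
        (Finset.ne_of_mem_erase he).symm x hxuv hx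
    set T := Si.image (Sym2.map (πc K N hK)) with hT
    have hext : ∀ m : PM K, pmMonomial S (extPM K N hKN m) = pmMonomial T m := by
      intro m
      unfold pmMonomial
      rw [← Finset.insert_erase he0, Finset.prod_insert (Finset.notMem_erase _ _)]
      rw [if_pos (mem_edges_iff.2 (extPM_u hKN m)), one_mul]
      rw [prod_lower hKN hK Si hint
        (fun e => if e ∈ PM.edges (extPM K N hKN m) then (1 : ℝ) else 0)]
      apply Finset.prod_congr rfl
      intro e' _
      by_cases hm : e' ∈ PM.edges m
      · rw [if_pos ((mem_edges_ext hKN m e').2 hm), if_pos hm]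
      · rw [if_neg (fun hc => hm ((mem_edges_ext hKN m e').1 hc)), if_neg hm]
    have hswap : ∀ (m : PM K) (a : Fin K), pmMonomial S (swapExt K N hKN a m) = 0 := by
      intro m a
      refine Finset.prod_eq_zero he0 ?_
      rw [if_neg ?_]
      intro hc
      have h1 := mem_edges_iff.1 hc
      rw [swapExt_u hKN m a] at h1
      exact hιv a h1
    have hfun : (fun m : PM K => ((K : ℝ) - 2 * d) * pmMonomial S (extPM K N hKN m)
        - ∑ a : Fin K, pmMonomial S (swapExt K N hKN a m))
        = ((K : ℝ) - 2 * d) • pmMonomial T := by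
      funext m
      rw [hext m, Finset.sum_eq_zero (fun a _ => hswap m a), sub_zero, Pi.smul_apply,
        smul_eq_mul]
    rw [hfun]
    refine Submodule.smul_mem _ _ (Submodule.subset_span ⟨T, ?_, rfl⟩)
    have h1 : T.card = Si.card := card_image_π hKN hK Si hint
    have h2 : Si.card = S.card - 1 := Finset.card_erase_of_mem he0
    have h3 : 0 < S.card := Finset.card_pos.2 ⟨_, he0⟩
    omega
  · by_cases hu : ∃ e ∈ S, u ∈ e
    · obtain ⟨eu, heuS, huu⟩ := hu
      obtain ⟨w, hw⟩ := Sym2.mem_iff_exists.1 huu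
      have hwne : eu ≠ s(u, v) := fun hc => he0 (hc ▸ heuS)
      obtain ⟨x0, rfl⟩ := hget w eu heuS (Or.inl (by rw [hw, Sym2.eq_swap])) hwne
      rw [Sym2.eq_swap] at hw
      -- now hw : eu = s(ιc x0, u)
      by_cases hv : ∃ e ∈ S, v ∈ e
      · -- Case 2d : edges at both u and v
        obtain ⟨ev, hevS, hvv⟩ := hv
        obtain ⟨w2, hw2⟩ := Sym2.mem_iff_exists.1 hvv
        have hw2ne : ev ≠ s(u, v) := fun hc => he0 (hc ▸ hevS)
        obtain ⟨y0, rfl⟩ := hget w2 ev hevS (Or.inr (by rw [hw2, Sym2.eq_swap])) hw2ne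
        rw [Sym2.eq_swap] at hw2
        -- hw2 : ev = s(ιc y0, v)
        have heuv : eu ≠ ev := by
          intro hc
          have : u ∈ ev := hc ▸ huu
          rw [hw2, Sym2.mem_iff] at this
          rcases this with h | h
          · exact hιu y0 h.symm
          · exact huv h
        have hxy : x0 ≠ y0 := by
          intro hc
          subst hc
          exact hvalid.2 eu heuS ev hevS heuv (ιc K N hKN x0)
            (by rw [hw]; simp) (by rw [hw2]; simp)
        have hev' : ev ∈ S.erase eu := Finset.mem_erase.2 ⟨fun hc => heuv hc.symm, hevS⟩
        set Si := (S.erase eu).erase ev with hSi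
        have hSiS : ∀ e ∈ Si, e ∈ S := fun e he =>
          Finset.mem_of_mem_erase (Finset.mem_of_mem_erase he)
        have hSineu : ∀ e ∈ Si, e ≠ eu := fun e he =>
          Finset.ne_of_mem_erase (Finset.mem_of_mem_erase he)
        have hSinev : ∀ e ∈ Si, e ≠ ev := fun e he => Finset.ne_of_mem_erase he
        have hint : ∀ e ∈ Si, ∀ x ∈ e, (x : ℕ) < K := by
          intro e he x hx
          by_contra hxK
          push_neg at hxK
          have hxN := x.isLt
          have hxuv : x = u ∨ x = v := by
            rcases Nat.lt_or_ge (x : ℕ) (K + 1) with h | h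
            · left; apply Fin.ext; simp only [hu_def]; omega
            · right; apply Fin.ext; simp only [hv_def]; omega
          rcases hxuv with rfl | rfl
          · exact hvalid.2 eu heuS e (hSiS e he) (hSineu e he).symm u
              (by rw [hw]; simp) hx
          · exact hvalid.2 ev hevS e (hSiS e he) (hSinev e he).symm v
              (by rw [hw2]; simp) hx
        set T := Si.image (Sym2.map (πc K N hK)) with hT
        have hx0T : ∀ e' ∈ T, x0 ∉ e' := by
          intro e' he' hx0
          obtain ⟨e, heSi, rfl⟩ := Finset.mem_image.1 he'
          have h1 : ιc K N hKN x0 ∈ e := by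
            have := (Sym2.mem_map (f := ιc K N hKN)).2 ⟨x0, hx0, rfl⟩
            rwa [lower_π hKN hK e (hint e heSi)] at this
          exact hvalid.2 eu heuS e (hSiS e heSi) (hSineu e heSi).symm
            (ιc K N hKN x0) (by rw [hw]; simp) h1
        have hy0T : ∀ e' ∈ T, y0 ∉ e' := by
          intro e' he' hy0
          obtain ⟨e, heSi, rfl⟩ := Finset.mem_image.1 he'
          have h1 : ιc K N hKN y0 ∈ e := by
            have := (Sym2.mem_map (f := ιc K N hKN)).2 ⟨y0, hy0, rfl⟩
            rwa [lower_π hKN hK e (hint e heSi)] at this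
          exact hvalid.2 ev hevS e (hSiS e heSi) (hSinev e heSi).symm
            (ιc K N hKN y0) (by rw [hw2]; simp) h1
        have hext : ∀ m : PM K, pmMonomial S (extPM K N hKN m) = 0 := by
          intro m
          refine Finset.prod_eq_zero heuS ?_
          rw [if_neg ?_]
          intro hc
          rw [hw] at hc
          have h1 := edge_eq_of_mem (Sym2.mem_mk_right _ u) hc
          rw [extPM_u hKN m] at h1
          rw [Sym2.eq_iff] at h1
          rcases h1 with ⟨h2, h3⟩ | ⟨h2, h3⟩
          · exact hιu x0 h2
          · exact hιv x0 h2
        have hswap : ∀ (m : PM K) (a : Fin K), pmMonomial S (swapExt K N hKN a m)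
            = (if a = x0 then (1 : ℝ) else 0) * ((if m.1 a = y0 then (1 : ℝ) else 0) *
              ∏ e' ∈ T,
                (if e' ∈ PM.edges m ∧ a ∉ e' ∧ m.1 a ∉ e' then (1 : ℝ) else 0)) := by
          intro m a
          unfold pmMonomial
          rw [← Finset.insert_erase heuS, Finset.prod_insert (Finset.notMem_erase _ _),
            ← Finset.insert_erase hev', Finset.prod_insert (Finset.notMem_erase _ _)]
          congr 1
          · -- eu factor
            by_cases hax : a = x0
            · subst hax
              rw [if_pos rfl, if_pos ?_]
              rw [hw]
              exact mem_edges_iff.2 (swapExt_a hKN m a)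
            · rw [if_neg hax, if_neg ?_]
              intro hc
              rw [hw] at hc
              have h1 := mem_edges_iff.1 hc
              by_cases h3 : x0 = m.1 a
              · exfalso
                rw [h3, swapExt_ma hKN m a, hu_def] at h1
                simp only [Fin.mk.injEq] at h1
                omega
              · rw [swapExt_int hKN m a x0 (fun hc2 => hax hc2.symm) h3] at h1
                exact hιu (m.1 x0) h1
          congr 1
          · -- ev factor
            by_cases hay : m.1 a = y0
            · rw [if_pos hay, if_pos ?_]
              rw [hw2, ← hay]
              exact mem_edges_iff.2 (swapExt_ma hKN m a)
            · rw [if_neg hay, if_neg ?_]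
              intro hc
              rw [hw2] at hc
              have h1 := mem_edges_iff.1 hc
              by_cases h2 : y0 = m.1 a
              · exact hay h2.symm
              by_cases h3 : y0 = a
              · exfalso
                rw [h3, swapExt_a hKN m a, hv_def] at h1
                simp only [Fin.mk.injEq] at h1
                omega
              · rw [swapExt_int hKN m a y0 h3 h2] at h1
                exact hιv (m.1 y0) h1
          · -- interior part
            rw [prod_lower hKN hK Si hint
              (fun e => if e ∈ PM.edges (swapExt K N hKN a m) then (1 : ℝ) else 0)]
            apply Finset.prod_congr rfl
            intro e' _
            by_cases hm : e' ∈ PM.edges m ∧ a ∉ e' ∧ m.1 a ∉ e'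
            · rw [if_pos ((mem_edges_swap hKN m a e').2 hm), if_pos hm]
            · rw [if_neg (fun hc => hm ((mem_edges_swap hKN m a e').1 hc)), if_neg hm]
        have hx0y0T : s(x0, y0) ∉ T := fun hc => hx0T _ hc (by simp)
        have hfun : (fun m : PM K => ((K : ℝ) - 2 * d) * pmMonomial S (extPM K N hKN m)
            - ∑ a : Fin K, pmMonomial S (swapExt K N hKN a m))
            = (-1 : ℝ) • pmMonomial (insert s(x0, y0) T) := by
          funext m
          rw [hext m, mul_zero, zero_sub, Pi.smul_apply, smul_eq_mul]
          rw [Finset.sum_congr rfl (fun a _ => hswap m a)]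
          rw [Finset.sum_congr rfl (fun a _ => by rw [ite_mul, one_mul, zero_mul]),
            Finset.sum_ite_eq' Finset.univ x0
              (fun a => (if m.1 a = y0 then (1:ℝ) else 0) * _),
            if_pos (Finset.mem_univ _)]
          unfold pmMonomial
          rw [Finset.prod_insert hx0y0T]
          by_cases hxy0 : m.1 x0 = y0
          · rw [if_pos hxy0, if_pos (mem_edges_iff.2 hxy0),
              prod_avoid m T x0 (fun e' he' _ => hx0T e' he')]
            ring
          · rw [if_neg hxy0, if_neg (fun hc => hxy0 (mem_edges_iff.1 hc))]
            ring
        rw [hfun]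
        refine Submodule.smul_mem _ _ (Submodule.subset_span ⟨insert s(x0, y0) T, ?_, rfl⟩)
        have h1 : T.card = Si.card := card_image_π hKN hK Si hint
        have h2 : Si.card = S.card - 2 := by
          rw [hSi, Finset.card_erase_of_mem hev', Finset.card_erase_of_mem heuS]
          omega
        have h3 : 2 ≤ S.card := by
          have := Finset.card_le_card (show {eu, ev} ⊆ S by
            intro z hz
            rcases Finset.mem_insert.1 hz with rfl | hz
            · exact heuS
            · rw [Finset.mem_singleton.1 hz]; exact hevS)
          rwa [Finset.card_pair heuv] at this
        have h4 := Finset.card_insert_le s(x0, y0) T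
        omega
      · -- Case 2b : edge at u only
        push_neg at hv
        set Si := S.erase eu with hSi
        have hSiS : ∀ e ∈ Si, e ∈ S := fun e he => Finset.mem_of_mem_erase he
        have hSineu : ∀ e ∈ Si, e ≠ eu := fun e he => Finset.ne_of_mem_erase he
        have hint : ∀ e ∈ Si, ∀ x ∈ e, (x : ℕ) < K := by
          intro e he x hx
          by_contra hxK
          push_neg at hxK
          have hxN := x.isLt
          have hxuv : x = u ∨ x = v := by
            rcases Nat.lt_or_ge (x : ℕ) (K + 1) with h | h
            · left; apply Fin.ext; simp only [hu_def]; omega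
            · right; apply Fin.ext; simp only [hv_def]; omega
          rcases hxuv with rfl | rfl
          · exact hvalid.2 eu heuS e (hSiS e he) (hSineu e he).symm u
              (by rw [hw]; simp) hx
          · exact hv e (hSiS e he) hx
        set T := Si.image (Sym2.map (πc K N hK)) with hT
        have hx0T : ∀ e' ∈ T, x0 ∉ e' := by
          intro e' he' hx0
          obtain ⟨e, heSi, rfl⟩ := Finset.mem_image.1 he'
          have h1 : ιc K N hKN x0 ∈ e := by
            have := (Sym2.mem_map (f := ιc K N hKN)).2 ⟨x0, hx0, rfl⟩
            rwa [lower_π hKN hK e (hint e heSi)] at this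
          exact hvalid.2 eu heuS e (hSiS e heSi) (hSineu e heSi).symm
            (ιc K N hKN x0) (by rw [hw]; simp) h1
        have hext : ∀ m : PM K, pmMonomial S (extPM K N hKN m) = 0 := by
          intro m
          refine Finset.prod_eq_zero heuS ?_
          rw [if_neg ?_]
          intro hc
          rw [hw] at hc
          have h1 := edge_eq_of_mem (Sym2.mem_mk_right _ u) hc
          rw [extPM_u hKN m] at h1
          rw [Sym2.eq_iff] at h1
          rcases h1 with ⟨h2, h3⟩ | ⟨h2, h3⟩
          · exact hιu x0 h2
          · exact hιv x0 h2
        have hswap : ∀ (m : PM K) (a : Fin K), pmMonomial S (swapExt K N hKN a m)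
            = (if a = x0 then (1 : ℝ) else 0) *
              ∏ e' ∈ T,
                (if e' ∈ PM.edges m ∧ a ∉ e' ∧ m.1 a ∉ e' then (1 : ℝ) else 0) := by
          intro m a
          unfold pmMonomial
          rw [← Finset.insert_erase heuS, Finset.prod_insert (Finset.notMem_erase _ _)]
          congr 1
          · by_cases hax : a = x0
            · subst hax
              rw [if_pos rfl, if_pos ?_]
              rw [hw]
              exact mem_edges_iff.2 (swapExt_a hKN m a)
            · rw [if_neg hax, if_neg ?_]
              intro hc
              rw [hw] at hc
              have h1 := mem_edges_iff.1 hc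
              by_cases h3 : x0 = m.1 a
              · exfalso
                rw [h3, swapExt_ma hKN m a, hu_def] at h1
                simp only [Fin.mk.injEq] at h1
                omega
              · rw [swapExt_int hKN m a x0 (fun hc2 => hax hc2.symm) h3] at h1
                exact hιu (m.1 x0) h1
          · rw [prod_lower hKN hK Si hint
              (fun e => if e ∈ PM.edges (swapExt K N hKN a m) then (1 : ℝ) else 0)]
            apply Finset.prod_congr rfl
            intro e' _
            by_cases hm : e' ∈ PM.edges m ∧ a ∉ e' ∧ m.1 a ∉ e'
            · rw [if_pos ((mem_edges_swap hKN m a e').2 hm), if_pos hm]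
            · rw [if_neg (fun hc => hm ((mem_edges_swap hKN m a e').1 hc)), if_neg hm]
        have hfun : (fun m : PM K => ((K : ℝ) - 2 * d) * pmMonomial S (extPM K N hKN m)
            - ∑ a : Fin K, pmMonomial S (swapExt K N hKN a m))
            = (-1 : ℝ) • pmMonomial T := by
          funext m
          rw [hext m, mul_zero, zero_sub, Pi.smul_apply, smul_eq_mul]
          rw [Finset.sum_congr rfl (fun a _ => hswap m a)]
          rw [Finset.sum_congr rfl (fun a _ => by rw [ite_mul, one_mul, zero_mul]),
            Finset.sum_ite_eq' Finset.univ x0 _, if_pos (Finset.mem_univ _)]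
          unfold pmMonomial
          rw [prod_avoid m T x0 (fun e' he' _ => hx0T e' he')]
          ring
        rw [hfun]
        refine Submodule.smul_mem _ _ (Submodule.subset_span ⟨T, ?_, rfl⟩)
        have h1 : T.card = Si.card := card_image_π hKN hK Si hint
        have h2 : Si.card = S.card - 1 := Finset.card_erase_of_mem heuS
        have h3 : 0 < S.card := Finset.card_pos.2 ⟨_, heuS⟩
        omega
    · by_cases hv : ∃ e ∈ S, v ∈ e
      · -- Case 2c : edge at v only
        push_neg at hu
        obtain ⟨ev, hevS, hvv⟩ := hv
        obtain ⟨w2, hw2⟩ := Sym2.mem_iff_exists.1 hvv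
        have hw2ne : ev ≠ s(u, v) := fun hc => he0 (hc ▸ hevS)
        obtain ⟨y0, rfl⟩ := hget w2 ev hevS (Or.inr (by rw [hw2, Sym2.eq_swap])) hw2ne
        rw [Sym2.eq_swap] at hw2
        set Si := S.erase ev with hSi
        have hSiS : ∀ e ∈ Si, e ∈ S := fun e he => Finset.mem_of_mem_erase he
        have hSinev : ∀ e ∈ Si, e ≠ ev := fun e he => Finset.ne_of_mem_erase he
        have hint : ∀ e ∈ Si, ∀ x ∈ e, (x : ℕ) < K := by
          intro e he x hx
          by_contra hxK
          push_neg at hxK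
          have hxN := x.isLt
          have hxuv : x = u ∨ x = v := by
            rcases Nat.lt_or_ge (x : ℕ) (K + 1) with h | h
            · left; apply Fin.ext; simp only [hu_def]; omega
            · right; apply Fin.ext; simp only [hv_def]; omega
          rcases hxuv with rfl | rfl
          · exact hu e (hSiS e he) hx
          · exact hvalid.2 ev hevS e (hSiS e he) (hSinev e he).symm v
              (by rw [hw2]; simp) hx
        set T := Si.image (Sym2.map (πc K N hK)) with hT
        have hy0T : ∀ e' ∈ T, y0 ∉ e' := by
          intro e' he' hy0
          obtain ⟨e, heSi, rfl⟩ := Finset.mem_image.1 he'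
          have h1 : ιc K N hKN y0 ∈ e := by
            have := (Sym2.mem_map (f := ιc K N hKN)).2 ⟨y0, hy0, rfl⟩
            rwa [lower_π hKN hK e (hint e heSi)] at this
          exact hvalid.2 ev hevS e (hSiS e heSi) (hSinev e heSi).symm
            (ιc K N hKN y0) (by rw [hw2]; simp) h1
        have hext : ∀ m : PM K, pmMonomial S (extPM K N hKN m) = 0 := by
          intro m
          refine Finset.prod_eq_zero hevS ?_
          rw [if_neg ?_]
          intro hc
          rw [hw2] at hc
          have h1 := edge_eq_of_mem (Sym2.mem_mk_right _ v) hc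
          rw [extPM_v hKN m] at h1
          rw [Sym2.eq_iff] at h1
          rcases h1 with ⟨h2, h3⟩ | ⟨h2, h3⟩
          · exact hιv y0 h2
          · exact hιu y0 h2
        have hswap : ∀ (m : PM K) (a : Fin K), pmMonomial S (swapExt K N hKN a m)
            = (if m.1 a = y0 then (1 : ℝ) else 0) *
              ∏ e' ∈ T,
                (if e' ∈ PM.edges m ∧ a ∉ e' ∧ m.1 a ∉ e' then (1 : ℝ) else 0) := by
          intro m a
          unfold pmMonomial
          rw [← Finset.insert_erase hevS, Finset.prod_insert (Finset.notMem_erase _ _)]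
          congr 1
          · by_cases hay : m.1 a = y0
            · rw [if_pos hay, if_pos ?_]
              rw [hw2, ← hay]
              exact mem_edges_iff.2 (swapExt_ma hKN m a)
            · rw [if_neg hay, if_neg ?_]
              intro hc
              rw [hw2] at hc
              have h1 := mem_edges_iff.1 hc
              by_cases h2 : y0 = m.1 a
              · exact hay h2.symm
              by_cases h3 : y0 = a
              · exfalso
                rw [h3, swapExt_a hKN m a, hv_def] at h1
                simp only [Fin.mk.injEq] at h1
                omega
              · rw [swapExt_int hKN m a y0 h3 h2] at h1
                exact hιv (m.1 y0) h1
          · rw [prod_lower hKN hK Si hint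
              (fun e => if e ∈ PM.edges (swapExt K N hKN a m) then (1 : ℝ) else 0)]
            apply Finset.prod_congr rfl
            intro e' _
            by_cases hm : e' ∈ PM.edges m ∧ a ∉ e' ∧ m.1 a ∉ e'
            · rw [if_pos ((mem_edges_swap hKN m a e').2 hm), if_pos hm]
            · rw [if_neg (fun hc => hm ((mem_edges_swap hKN m a e').1 hc)), if_neg hm]
        have hfun : (fun m : PM K => ((K : ℝ) - 2 * d) * pmMonomial S (extPM K N hKN m)
            - ∑ a : Fin K, pmMonomial S (swapExt K N hKN a m))
            = (-1 : ℝ) • pmMonomial T := by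
          funext m
          rw [hext m, mul_zero, zero_sub, Pi.smul_apply, smul_eq_mul]
          rw [Finset.sum_congr rfl (fun a _ => hswap m a)]
          have hsum : ∑ a : Fin K, (if m.1 a = y0 then (1 : ℝ) else 0) *
              ∏ e' ∈ T, (if e' ∈ PM.edges m ∧ a ∉ e' ∧ m.1 a ∉ e' then (1 : ℝ) else 0)
              = ∏ e' ∈ T, (if e' ∈ PM.edges m ∧ m.1 y0 ∉ e' ∧ m.1 (m.1 y0) ∉ e'
                  then (1 : ℝ) else 0) := by
            rw [Finset.sum_eq_single_of_mem (m.1 y0) (Finset.mem_univ _)]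
            · rw [if_pos (m.2.2 y0), one_mul]
            · intro a _ hne
              rw [if_neg (fun hc => hne (by rw [← hc, m.2.2])), zero_mul]
          rw [hsum, prod_avoid m T (m.1 y0) ?_]
          · unfold pmMonomial
            ring
          · intro e' he' hem hc
            exact hy0T e' he' ((mem_edge_partner hem y0).2 hc)
        rw [hfun]
        refine Submodule.smul_mem _ _ (Submodule.subset_span ⟨T, ?_, rfl⟩)
        have h1 : T.card = Si.card := card_image_π hKN hK Si hint
        have h2 : Si.card = S.card - 1 := Finset.card_erase_of_mem hevS
        have h3 : 0 < S.card := Finset.card_pos.2 ⟨_, hevS⟩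
        omega
      · -- Case 2a : S fully interior
        push_neg at hu hv
        have hint : ∀ e ∈ S, ∀ x ∈ e, (x : ℕ) < K := by
          intro e he x hx
          by_contra hxK
          push_neg at hxK
          have hxN := x.isLt
          have hxuv : x = u ∨ x = v := by
            rcases Nat.lt_or_ge (x : ℕ) (K + 1) with h | h
            · left; apply Fin.ext; simp only [hu_def]; omega
            · right; apply Fin.ext; simp only [hv_def]; omega
          rcases hxuv with rfl | rfl
          · exact hu e he hx
          · exact hv e he hx
        set T := S.image (Sym2.map (πc K N hK)) with hT
        have hext : ∀ m : PM K, pmMonomial S (extPM K N hKN m) = pmMonomial T m := by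
          intro m
          unfold pmMonomial
          rw [prod_lower hKN hK S hint
            (fun e => if e ∈ PM.edges (extPM K N hKN m) then (1 : ℝ) else 0)]
          apply Finset.prod_congr rfl
          intro e' _
          by_cases hm : e' ∈ PM.edges m
          · rw [if_pos ((mem_edges_ext hKN m e').2 hm), if_pos hm]
          · rw [if_neg (fun hc => hm ((mem_edges_ext hKN m e').1 hc)), if_neg hm]
        have hswap : ∀ (m : PM K) (a : Fin K), pmMonomial S (swapExt K N hKN a m)
            = ∏ e' ∈ T,
                (if e' ∈ PM.edges m ∧ a ∉ e' ∧ m.1 a ∉ e' then (1 : ℝ) else 0) := by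
          intro m a
          unfold pmMonomial
          rw [prod_lower hKN hK S hint
            (fun e => if e ∈ PM.edges (swapExt K N hKN a m) then (1 : ℝ) else 0)]
          apply Finset.prod_congr rfl
          intro e' _
          by_cases hm : e' ∈ PM.edges m ∧ a ∉ e' ∧ m.1 a ∉ e'
          · rw [if_pos ((mem_edges_swap hKN m a e').2 hm), if_pos hm]
          · rw [if_neg (fun hc => hm ((mem_edges_swap hKN m a e').1 hc)), if_neg hm]
        have hTcard : T.card = S.card := card_image_π hKN hK S hint
        have hfun : (fun m : PM K => ((K : ℝ) - 2 * d) * pmMonomial S (extPM K N hKN m)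
            - ∑ a : Fin K, pmMonomial S (swapExt K N hKN a m))
            = ((2 * (T.card : ℝ) - 2 * d)) • pmMonomial T := by
          funext m
          rw [hext m, Finset.sum_congr rfl (fun a _ => hswap m a),
            sum_swap_interior m T, Pi.smul_apply, smul_eq_mul]
          unfold pmMonomial
          ring
        rw [hfun]
        by_cases hTd : T.card = d
        · have hzero : (2 * (T.card : ℝ) - 2 * d) = 0 := by rw [hTd]; ring
          rw [hzero, zero_smul]
          exact Submodule.zero_mem _
        · refine Submodule.smul_mem _ _ (Submodule.subset_span ⟨T, ?_, rfl⟩)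
          omega
/-- Degree reduction for the perfect matching scheme: if
`f : M_{2n} → {0,1}` vanishes outside the coset of matchings containing the edge
`{2n-1, 2n}`, then the restriction `g` of `f` to that coset (a function on `M_{2(n-1)}`)
satisfies `deg g ≤ max (deg f - 1) 0`. -/
theorem pm_degree_reduction
    (n : ℕ) (hn : 2 ≤ n) (f : PM (2 * n) → ℝ)
    (hBool : ∀ m, f m = 0 ∨ f m = 1)
    (hfix : ∀ m : PM (2 * n), f m = 1 →
      m.1 ⟨2 * n - 2, by omega⟩ = ⟨2 * n - 1, by omega⟩)
    (g : PM (2 * (n - 1)) → ℝ)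
    (hg : ∀ m' : PM (2 * (n - 1)), g m' = f (extPM (2 * (n - 1)) (2 * n) (by omega) m')) :
    pmDeg (2 * (n - 1)) g ≤ max (pmDeg (2 * n) f - 1) 0 := by
  classical
  have hKN : 2 * n = 2 * (n - 1) + 2 := by omega
  set d := pmDeg (2 * n) f with hd_def
  have hne : PMDegLE (2 * n) (n - 1) f := span_all n (by omega) f
  have hdf : PMDegLE (2 * n) d f := by
    rw [hd_def]
    show PMDegLE (2 * n) (sInf {d | PMDegLE (2 * n) d f}) f
    exact Nat.sInf_mem (s := {d | PMDegLE (2 * n) d f}) ⟨n - 1, hne⟩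
  have main : pmDeg (2 * (n - 1)) g ≤ d - 1 := by
    rcases Nat.eq_zero_or_pos d with h0 | hpos
    · -- f is constant
      have hdeg0 : PMDegLE (2 * n) 0 f := h0 ▸ hdf
      have hsub : {gg : PM (2 * n) → ℝ | ∃ S : Finset (Sym2 (Fin (2 * n))),
          S.card ≤ 0 ∧ gg = pmMonomial S} ⊆ {fun _ => (1 : ℝ)} := by
        rintro gg ⟨S, hS0, rfl⟩
        have hSe : S = ∅ := Finset.card_eq_zero.1 (Nat.le_zero.1 hS0)
        subst hSe
        simp only [Set.mem_singleton_iff]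
        funext mm
        simp [pmMonomial]
      have hf' := Submodule.span_mono hsub hdeg0
      rw [Submodule.mem_span_singleton] at hf'
      obtain ⟨cst, hcst⟩ := hf'
      have hgconst : g = cst • pmMonomial (∅ : Finset (Sym2 (Fin (2 * (n - 1))))) := by
        funext m
        rw [hg m, ← hcst]
        simp [pmMonomial]
      have hmem : PMDegLE (2 * (n - 1)) 0 g := by
        rw [hgconst]
        exact Submodule.smul_mem _ _ (Submodule.subset_span ⟨∅, by simp, rfl⟩)
      have h1 : pmDeg (2 * (n - 1)) g ≤ 0 := Nat.sInf_le hmem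
      omega
    rcases le_or_gt (n - 1) d with hbig | hsmall
    · have h1 := span_all (n - 1) (by omega) g
      have h2 : pmDeg (2 * (n - 1)) g ≤ n - 1 - 1 := Nat.sInf_le h1
      omega
    · -- main case : 1 ≤ d ≤ n - 2
      set c : ℝ := ((2 * (n - 1) : ℕ) : ℝ) - 2 * d with hc_def
      have hcnat : 2 * d + 1 ≤ 2 * (n - 1) := by omega
      have hcpos : (0 : ℝ) < c := by
        rw [hc_def]
        have : (2 * (d : ℝ)) + 1 ≤ ((2 * (n - 1) : ℕ) : ℝ) := by exact_mod_cast hcnat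
        linarith
      have hswap0 : ∀ (m : PM (2 * (n - 1))) (a : Fin (2 * (n - 1))),
          f (swapExt (2 * (n - 1)) (2 * n) hKN a m) = 0 := by
        intro m a
        rcases hBool (swapExt (2 * (n - 1)) (2 * n) hKN a m) with h | h
        · exact h
        · exfalso
          have hfx := hfix _ h
          have hidx : (⟨2 * n - 2, by omega⟩ : Fin (2 * n)) = ⟨2 * (n - 1), by omega⟩ := by
            apply Fin.ext
            simp only
            omega
          rw [hidx, swapExt_u hKN m a] at hfx
          have h2 := congrArg Fin.val hfx
          rw [ιc_val] at h2
          have h3 := a.isLt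
          simp only at h2
          omega
      have hpsif : (fun m : PM (2 * (n - 1)) =>
          c * f (extPM (2 * (n - 1)) (2 * n) hKN m)
          - ∑ a : Fin (2 * (n - 1)), f (swapExt (2 * (n - 1)) (2 * n) hKN a m))
          ∈ Submodule.span ℝ {gg : PM (2 * (n - 1)) → ℝ |
            ∃ T : Finset (Sym2 (Fin (2 * (n - 1)))), T.card ≤ d - 1 ∧ gg = pmMonomial T} := by
        let Φ : (PM (2 * n) → ℝ) →ₗ[ℝ] (PM (2 * (n - 1)) → ℝ) :=
          { toFun := fun F => fun m => c * F (extPM (2 * (n - 1)) (2 * n) hKN m)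
              - ∑ a : Fin (2 * (n - 1)), F (swapExt (2 * (n - 1)) (2 * n) hKN a m)
            map_add' := fun F1 F2 => by
              funext m
              simp only [Pi.add_apply, Finset.sum_add_distrib]
              ring
            map_smul' := fun r F => by
              funext m
              simp only [Pi.smul_apply, smul_eq_mul, RingHom.id_apply, ← Finset.mul_sum]
              ring }
        have h1 : Φ f ∈ Submodule.map Φ (Submodule.span ℝ {gg : PM (2 * n) → ℝ |
            ∃ S : Finset (Sym2 (Fin (2 * n))), S.card ≤ d ∧ gg = pmMonomial S}) :=
          Submodule.mem_map_of_mem hdf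
        rw [Submodule.map_span] at h1
        have h2 : Submodule.span ℝ (Φ '' {gg : PM (2 * n) → ℝ |
            ∃ S : Finset (Sym2 (Fin (2 * n))), S.card ≤ d ∧ gg = pmMonomial S})
            ≤ Submodule.span ℝ {gg : PM (2 * (n - 1)) → ℝ |
              ∃ T : Finset (Sym2 (Fin (2 * (n - 1)))), T.card ≤ d - 1 ∧ gg = pmMonomial T} := by
          apply Submodule.span_le.2
          rintro _ ⟨F, ⟨S, hScard, rfl⟩, rfl⟩
          exact psi_mem (2 * (n - 1)) (2 * n) hKN (by omega) d S hScard
        exact h2 h1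
      have hgeq : g = c⁻¹ • (fun m : PM (2 * (n - 1)) =>
          c * f (extPM (2 * (n - 1)) (2 * n) hKN m)
          - ∑ a : Fin (2 * (n - 1)), f (swapExt (2 * (n - 1)) (2 * n) hKN a m)) := by
        funext m
        rw [Pi.smul_apply, smul_eq_mul, Finset.sum_eq_zero (fun a _ => hswap0 m a), sub_zero,
          ← mul_assoc, inv_mul_cancel₀ (ne_of_gt hcpos), one_mul]
        exact hg m
      have hmem : PMDegLE (2 * (n - 1)) (d - 1) g := by
        rw [hgeq]
        exact Submodule.smul_mem _ _ hpsif
      exact Nat.sInf_le hmem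
  exact le_trans main (le_max_left _ _)
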